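/- The rewrite system WS is locally confluent: its only critical pairs arise from overlaps of the rule t[nil] → t with the homomorphic substitution rules for s, + and ×, namely f(t₁,…,tₖ) ← f(t₁,…,tₖ)[nil] → f(t₁[nil],…,tₖ[nil]), and each of these pairs is joinable. Combined with termination, WS is confluent. -/
import Mathlib


/-- Terms: arithmetic terms (with de Bruijn variables), lists, de Bruijn
indices `1`/`S`, explicit substitution `·[·]`, and class terms. -/
inductive Tm : Type
  | var : ℕ → Tm
  | zero : Tm
  | s : Tm → Tm
  | plus : Tm → Tm → Tm
  | times : Tm → Tm → Tm
  | one : Tm                 -- the index 1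
  | S : Tm → Tm              -- the index successor S
  | sub : Tm → Tm → Tm       -- explicit substitution t[l]
  | nil : Tm
  | cons : Tm → Tm → Tm      -- list cons ::
  | doteq : Tm → Tm → Tm     -- class former ≐ for =
  | cup : Tm → Tm → Tm       -- class former ∪ for ∨
  | cap : Tm → Tm → Tm       -- class former ∩ for ∧
  | sup : Tm → Tm → Tm       -- class former ⊃ for →
  | emptyc : Tm              -- class former ∅ for ⊥
  | Pcl : Tm → Tm            -- class former 𝒫 for ∃
  | Ccl : Tm → Tm            -- class former 𝒞 for ∀

/-- Shifting all de Bruijn variables of a term up by one. -/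
def Tm.shiftT : Tm → Tm
  | .var n => .var (n + 1)
  | .zero => .zero
  | .s t => .s t.shiftT
  | .plus t u => .plus t.shiftT u.shiftT
  | .times t u => .times t.shiftT u.shiftT
  | .one => .one
  | .S t => .S t.shiftT
  | .sub t u => .sub t.shiftT u.shiftT
  | .nil => .nil
  | .cons t u => .cons t.shiftT u.shiftT
  | .doteq t u => .doteq t.shiftT u.shiftT
  | .cup t u => .cup t.shiftT u.shiftT
  | .cap t u => .cap t.shiftT u.shiftT
  | .sup t u => .sup t.shiftT u.shiftT
  | .emptyc => .emptyc
  | .Pcl t => .Pcl t.shiftT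
  | .Ccl t => .Ccl t.shiftT

/-- One step of the term part of the rewrite system WS, applied at any
position. -/
inductive TStep : Tm → Tm → Prop
  | subNil (t : Tm) : TStep (.sub t .nil) t
  | subOne (t l : Tm) : TStep (.sub .one (.cons t l)) t
  | subS (n t l : Tm) : TStep (.sub (.S n) (.cons t l)) (.sub n l)
  | subs (n l : Tm) : TStep (.sub (.s n) l) (.s (.sub n l))
  | subPlus (a b l : Tm) : TStep (.sub (.plus a b) l) (.plus (.sub a l) (.sub b l))
  | subTimes (a b l : Tm) : TStep (.sub (.times a b) l) (.times (.sub a l) (.sub b l))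
  | sC {t t'} : TStep t t' → TStep (.s t) (.s t')
  | SC {t t'} : TStep t t' → TStep (.S t) (.S t')
  | plusL {t t' u} : TStep t t' → TStep (.plus t u) (.plus t' u)
  | plusR {t u u'} : TStep u u' → TStep (.plus t u) (.plus t u')
  | timesL {t t' u} : TStep t t' → TStep (.times t u) (.times t' u)
  | timesR {t u u'} : TStep u u' → TStep (.times t u) (.times t u')
  | subL {t t' u} : TStep t t' → TStep (.sub t u) (.sub t' u)
  | subR {t u u'} : TStep u u' → TStep (.sub t u) (.sub t u')
  | consL {t t' u} : TStep t t' → TStep (.cons t u) (.cons t' u)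
  | consR {t u u'} : TStep u u' → TStep (.cons t u) (.cons t u')
  | doteqL {t t' u} : TStep t t' → TStep (.doteq t u) (.doteq t' u)
  | doteqR {t u u'} : TStep u u' → TStep (.doteq t u) (.doteq t u')
  | cupL {t t' u} : TStep t t' → TStep (.cup t u) (.cup t' u)
  | cupR {t u u'} : TStep u u' → TStep (.cup t u) (.cup t u')
  | capL {t t' u} : TStep t t' → TStep (.cap t u) (.cap t' u)
  | capR {t u u'} : TStep u u' → TStep (.cap t u) (.cap t u')
  | supL {t t' u} : TStep t t' → TStep (.sup t u) (.sup t' u)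
  | supR {t u u'} : TStep u u' → TStep (.sup t u) (.sup t u')
  | PclC {t t'} : TStep t t' → TStep (.Pcl t) (.Pcl t')
  | CclC {t t'} : TStep t t' → TStep (.Ccl t) (.Ccl t')

/-- Formulas: equalities, membership `ε`, and the logical connectives (de
Bruijn binders). -/
inductive Fm : Type
  | eq : Tm → Tm → Fm
  | eps : Tm → Tm → Fm
  | bot : Fm
  | imp : Fm → Fm → Fm
  | and : Fm → Fm → Fm
  | or : Fm → Fm → Fm
  | all : Fm → Fm
  | ex : Fm → Fm

/-- One step of the rewrite system WS on formulas, applied at any position: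
term steps inside atoms, the decoding rules for atoms, and congruence through
the connectives. -/
inductive FStep : Fm → Fm → Prop
  | eqL {t t' u} : TStep t t' → FStep (.eq t u) (.eq t' u)
  | eqR {t u u'} : TStep u u' → FStep (.eq t u) (.eq t u')
  | epsL {t t' u} : TStep t t' → FStep (.eps t u) (.eps t' u)
  | epsR {t u u'} : TStep u u' → FStep (.eps t u) (.eps t u')
  | decEq (l t₁ t₂ : Tm) :
      FStep (.eps l (.doteq t₁ t₂)) (.eq (.sub t₁ l) (.sub t₂ l))
  | decCup (l a b : Tm) : FStep (.eps l (.cup a b)) (.or (.eps l a) (.eps l b))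
  | decCap (l a b : Tm) : FStep (.eps l (.cap a b)) (.and (.eps l a) (.eps l b))
  | decSup (l a b : Tm) : FStep (.eps l (.sup a b)) (.imp (.eps l a) (.eps l b))
  | decEmpty (l : Tm) : FStep (.eps l .emptyc) .bot
  | decP (l a : Tm) :
      FStep (.eps l (.Pcl a)) (.ex (.eps (.cons (.var 0) l.shiftT) a.shiftT))
  | decC (l a : Tm) :
      FStep (.eps l (.Ccl a)) (.all (.eps (.cons (.var 0) l.shiftT) a.shiftT))
  | impL {A A' B} : FStep A A' → FStep (.imp A B) (.imp A' B)
  | impR {A B B'} : FStep B B' → FStep (.imp A B) (.imp A B')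
  | andL {A A' B} : FStep A A' → FStep (.and A B) (.and A' B)
  | andR {A B B'} : FStep B B' → FStep (.and A B) (.and A B')
  | orL {A A' B} : FStep A A' → FStep (.or A B) (.or A' B)
  | orR {A B B'} : FStep B B' → FStep (.or A B) (.or A B')
  | allC {A A'} : FStep A A' → FStep (.all A) (.all A')
  | exC {A A'} : FStep A A' → FStep (.ex A) (.ex A')

open Relation

/-- Size of a term. -/
def Tm.size : Tm → ℕ
  | .var _ => 1
  | .zero => 1
  | .s t => t.size + 1
  | .plus t u => t.size + u.size + 1
  | .times t u => t.size + u.size + 1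
  | .one => 1
  | .S t => t.size + 1
  | .sub t u => t.size + u.size + 1
  | .nil => 1
  | .cons t u => t.size + u.size + 1
  | .doteq t u => t.size + u.size + 1
  | .cup t u => t.size + u.size + 1
  | .cap t u => t.size + u.size + 1
  | .sup t u => t.size + u.size + 1
  | .emptyc => 1
  | .Pcl t => t.size + 1
  | .Ccl t => t.size + 1

lemma Tm.shiftT_size (t : Tm) : t.shiftT.size = t.size := by
  induction t <;> simp [Tm.shiftT, Tm.size, *]

/-- Apply a (normal) list to a (normal) term: normal form of `sub t l`. -/
def Tm.app : Tm → Tm → Tm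
  | t, .nil => t
  | .s n, l => .s (n.app l)
  | .plus a b, l => .plus (a.app l) (b.app l)
  | .times a b, l => .times (a.app l) (b.app l)
  | .one, .cons t _ => t
  | .S n, .cons _ l => n.app l
  | t, l => .sub t l

/-- Normalization of terms. -/
def Tm.norm : Tm → Tm
  | .var n => .var n
  | .zero => .zero
  | .s t => .s t.norm
  | .plus t u => .plus t.norm u.norm
  | .times t u => .times t.norm u.norm
  | .one => .one
  | .S t => .S t.norm
  | .sub t u => t.norm.app u.norm
  | .nil => .nil
  | .cons t u => .cons t.norm u.norm
  | .doteq t u => .doteq t.norm u.norm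
  | .cup t u => .cup t.norm u.norm
  | .cap t u => .cap t.norm u.norm
  | .sup t u => .sup t.norm u.norm
  | .emptyc => .emptyc
  | .Pcl t => .Pcl t.norm
  | .Ccl t => .Ccl t.norm

lemma Tm.app_nil (t : Tm) : t.app .nil = t := by
  induction t <;> simp [Tm.app, *]

lemma Tm.app_s (n l : Tm) : Tm.app (.s n) l = .s (n.app l) := by
  cases l <;> simp [Tm.app, Tm.app_nil]

lemma Tm.app_plus (a b l : Tm) :
    Tm.app (.plus a b) l = .plus (a.app l) (b.app l) := by
  cases l <;> simp [Tm.app, Tm.app_nil]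

lemma Tm.app_times (a b l : Tm) :
    Tm.app (.times a b) l = .times (a.app l) (b.app l) := by
  cases l <;> simp [Tm.app, Tm.app_nil]

abbrev TStar := Relation.ReflTransGen TStep
abbrev FStar := Relation.ReflTransGen FStep

lemma sub_star_app : ∀ (t l : Tm), TStar (.sub t l) (t.app l) := by
  intro t
  induction t with
  | s n ih =>
      intro l
      rw [Tm.app_s]
      exact .head (.subs n l) ((ih l).lift (fun x => Tm.s x) (fun _ _ h => .sC h))
  | plus a b iha ihb =>
      intro l
      rw [Tm.app_plus]
      exact .head (.subPlus a b l) (Relation.ReflTransGen.trans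
        ((iha l).lift (fun x => Tm.plus x (.sub b l)) (fun _ _ h => .plusL h))
        ((ihb l).lift (fun x => Tm.plus (a.app l) x) (fun _ _ h => .plusR h)))
  | times a b iha ihb =>
      intro l
      rw [Tm.app_times]
      exact .head (.subTimes a b l) (Relation.ReflTransGen.trans
        ((iha l).lift (fun x => Tm.times x (.sub b l)) (fun _ _ h => .timesL h))
        ((ihb l).lift (fun x => Tm.times (a.app l) x) (fun _ _ h => .timesR h)))
  | one =>
      intro l
      cases l <;> first
        | exact .single (.subNil _)
        | exact .single (.subOne _ _)
        | exact .refl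
  | S n ih =>
      intro l
      cases l <;> first
        | exact .single (.subNil _)
        | exact .head (.subS _ _ _) (ih _)
        | exact .refl
  | _ =>
      intro l
      cases l <;> first
        | exact .single (.subNil _)
        | exact .refl

lemma tm_star_norm : ∀ t : Tm, TStar t t.norm := by
  intro t
  induction t with
  | sub a b iha ihb =>
      exact Relation.ReflTransGen.trans (Relation.ReflTransGen.trans
        (iha.lift (fun x => Tm.sub x b) (fun _ _ h => .subL h))
        (ihb.lift (fun x => Tm.sub a.norm x) (fun _ _ h => .subR h)))
        (sub_star_app a.norm b.norm)
  | var n => exact .refl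
  | zero => exact .refl
  | one => exact .refl
  | nil => exact .refl
  | emptyc => exact .refl
  | s a ih => exact ih.lift (fun x => Tm.s x) (fun _ _ h => .sC h)
  | S a ih => exact ih.lift (fun x => Tm.S x) (fun _ _ h => .SC h)
  | Pcl a ih => exact ih.lift (fun x => Tm.Pcl x) (fun _ _ h => .PclC h)
  | Ccl a ih => exact ih.lift (fun x => Tm.Ccl x) (fun _ _ h => .CclC h)
  | plus a b iha ihb =>
      exact .trans (iha.lift (fun x => Tm.plus x b) (fun _ _ h => .plusL h))
        (ihb.lift (fun x => Tm.plus a.norm x) (fun _ _ h => .plusR h))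
  | times a b iha ihb =>
      exact .trans (iha.lift (fun x => Tm.times x b) (fun _ _ h => .timesL h))
        (ihb.lift (fun x => Tm.times a.norm x) (fun _ _ h => .timesR h))
  | cons a b iha ihb =>
      exact .trans (iha.lift (fun x => Tm.cons x b) (fun _ _ h => .consL h))
        (ihb.lift (fun x => Tm.cons a.norm x) (fun _ _ h => .consR h))
  | doteq a b iha ihb =>
      exact .trans (iha.lift (fun x => Tm.doteq x b) (fun _ _ h => .doteqL h))
        (ihb.lift (fun x => Tm.doteq a.norm x) (fun _ _ h => .doteqR h))
  | cup a b iha ihb =>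
      exact .trans (iha.lift (fun x => Tm.cup x b) (fun _ _ h => .cupL h))
        (ihb.lift (fun x => Tm.cup a.norm x) (fun _ _ h => .cupR h))
  | cap a b iha ihb =>
      exact .trans (iha.lift (fun x => Tm.cap x b) (fun _ _ h => .capL h))
        (ihb.lift (fun x => Tm.cap a.norm x) (fun _ _ h => .capR h))
  | sup a b iha ihb =>
      exact .trans (iha.lift (fun x => Tm.sup x b) (fun _ _ h => .supL h))
        (ihb.lift (fun x => Tm.sup a.norm x) (fun _ _ h => .supR h))

lemma tstep_norm {t u : Tm} (h : TStep t u) : t.norm = u.norm := by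
  induction h with
  | subNil t => simp [Tm.norm, Tm.app_nil]
  | subOne t l => rfl
  | subS n t l => rfl
  | subs n l => simp [Tm.norm, Tm.app_s]
  | subPlus a b l => simp [Tm.norm, Tm.app_plus]
  | subTimes a b l => simp [Tm.norm, Tm.app_times]
  | _ => simp [Tm.norm, *]

lemma Tm.app_shift : ∀ (t l : Tm), (t.app l).shiftT = t.shiftT.app l.shiftT := by
  intro t
  induction t <;> intro l <;> cases l <;>
    simp_all [Tm.app, Tm.shiftT, Tm.app_nil, Tm.app_s, Tm.app_plus, Tm.app_times]

lemma Tm.norm_shift : ∀ t : Tm, t.shiftT.norm = t.norm.shiftT := by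
  intro t
  induction t <;> simp_all [Tm.norm, Tm.shiftT, Tm.app_shift]

/-- Decoding of class membership (on normal terms). -/
def decode : Tm → Tm → Fm
  | l, .doteq a b => .eq (a.app l) (b.app l)
  | l, .cup a b => .or (decode l a) (decode l b)
  | l, .cap a b => .and (decode l a) (decode l b)
  | l, .sup a b => .imp (decode l a) (decode l b)
  | _, .emptyc => .bot
  | l, .Pcl a => .ex (decode (.cons (.var 0) l.shiftT) a.shiftT)
  | l, .Ccl a => .all (decode (.cons (.var 0) l.shiftT) a.shiftT)
  | l, c => .eps l c
termination_by l c => c.size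
decreasing_by all_goals simp [Tm.size, Tm.shiftT_size] <;> omega

/-- Normalization of formulas. -/
def Fm.norm : Fm → Fm
  | .eq t u => .eq t.norm u.norm
  | .eps l c => decode l.norm c.norm
  | .bot => .bot
  | .imp A B => .imp A.norm B.norm
  | .and A B => .and A.norm B.norm
  | .or A B => .or A.norm B.norm
  | .all A => .all A.norm
  | .ex A => .ex A.norm

lemma fstep_norm {A B : Fm} (h : FStep A B) : A.norm = B.norm := by
  induction h with
  | eqL h => simp [Fm.norm, tstep_norm h]
  | eqR h => simp [Fm.norm, tstep_norm h]
  | epsL h => simp [Fm.norm, tstep_norm h]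
  | epsR h => simp [Fm.norm, tstep_norm h]
  | decEq l t₁ t₂ => simp [Fm.norm, Tm.norm, decode]
  | decCup l a b => simp [Fm.norm, Tm.norm, decode]
  | decCap l a b => simp [Fm.norm, Tm.norm, decode]
  | decSup l a b => simp [Fm.norm, Tm.norm, decode]
  | decEmpty l => simp [Fm.norm, Tm.norm, decode]
  | decP l a => simp [Fm.norm, Tm.norm, decode, Tm.norm_shift]
  | decC l a => simp [Fm.norm, Tm.norm, decode, Tm.norm_shift]
  | _ => simp [Fm.norm, *]

lemma eps_decode : ∀ (n : ℕ) (c l : Tm), c.size ≤ n → FStar (.eps l c) (decode l c) := by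
  intro n
  induction n with
  | zero => intro c l h; cases c <;> simp [Tm.size] at h
  | succ n ih =>
      intro c l h
      cases c with
      | doteq a b =>
          simp only [decode]
          refine .head (.decEq l a b) (Relation.ReflTransGen.trans
            ((sub_star_app a l).lift (fun x => Fm.eq x (.sub b l)) (fun _ _ h => .eqL h))
            ((sub_star_app b l).lift (fun x => Fm.eq (a.app l) x) (fun _ _ h => .eqR h)))
      | cup a b =>
          simp [Tm.size] at h
          simp only [decode]
          exact .head (.decCup l a b) (Relation.ReflTransGen.trans
            ((ih a l (by omega)).lift (fun x => Fm.or x (.eps l b)) (fun _ _ h => .orL h))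
            ((ih b l (by omega)).lift (fun x => Fm.or (decode l a) x) (fun _ _ h => .orR h)))
      | cap a b =>
          simp [Tm.size] at h
          simp only [decode]
          exact .head (.decCap l a b) (Relation.ReflTransGen.trans
            ((ih a l (by omega)).lift (fun x => Fm.and x (.eps l b)) (fun _ _ h => .andL h))
            ((ih b l (by omega)).lift (fun x => Fm.and (decode l a) x) (fun _ _ h => .andR h)))
      | sup a b =>
          simp [Tm.size] at h
          simp only [decode]
          exact .head (.decSup l a b) (Relation.ReflTransGen.trans
            ((ih a l (by omega)).lift (fun x => Fm.imp x (.eps l b)) (fun _ _ h => .impL h))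
            ((ih b l (by omega)).lift (fun x => Fm.imp (decode l a) x) (fun _ _ h => .impR h)))
      | emptyc => simp only [decode]; exact .single (.decEmpty l)
      | Pcl a =>
          simp [Tm.size] at h
          simp only [decode]
          exact .head (.decP l a)
            ((ih a.shiftT (.cons (.var 0) l.shiftT) (by simp [Tm.shiftT_size]; omega)).lift
              (fun x => Fm.ex x) (fun _ _ h => .exC h))
      | Ccl a =>
          simp [Tm.size] at h
          simp only [decode]
          exact .head (.decC l a)
            ((ih a.shiftT (.cons (.var 0) l.shiftT) (by simp [Tm.shiftT_size]; omega)).lift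
              (fun x => Fm.all x) (fun _ _ h => .allC h))
      | _ => simp only [decode]; exact .refl

lemma fm_star_norm : ∀ A : Fm, FStar A A.norm := by
  intro A
  induction A with
  | eq t u =>
      exact Relation.ReflTransGen.trans
        ((tm_star_norm t).lift (fun x => Fm.eq x u) (fun _ _ h => .eqL h))
        ((tm_star_norm u).lift (fun x => Fm.eq t.norm x) (fun _ _ h => .eqR h))
  | eps l c =>
      exact Relation.ReflTransGen.trans (Relation.ReflTransGen.trans
        ((tm_star_norm l).lift (fun x => Fm.eps x c) (fun _ _ h => .epsL h))
        ((tm_star_norm c).lift (fun x => Fm.eps l.norm x) (fun _ _ h => .epsR h)))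
        (eps_decode c.norm.size c.norm l.norm le_rfl)
  | bot => exact .refl
  | imp A B ihA ihB =>
      exact Relation.ReflTransGen.trans
        (ihA.lift (fun x => Fm.imp x B) (fun _ _ h => .impL h))
        (ihB.lift (fun x => Fm.imp A.norm x) (fun _ _ h => .impR h))
  | and A B ihA ihB =>
      exact Relation.ReflTransGen.trans
        (ihA.lift (fun x => Fm.and x B) (fun _ _ h => .andL h))
        (ihB.lift (fun x => Fm.and A.norm x) (fun _ _ h => .andR h))
  | or A B ihA ihB =>
      exact Relation.ReflTransGen.trans
        (ihA.lift (fun x => Fm.or x B) (fun _ _ h => .orL h))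
        (ihB.lift (fun x => Fm.or A.norm x) (fun _ _ h => .orR h))
  | all A ihA => exact ihA.lift (fun x => Fm.all x) (fun _ _ h => .allC h)
  | ex A ihA => exact ihA.lift (fun x => Fm.ex x) (fun _ _ h => .exC h)

lemma tstar_norm {t u : Tm} (h : TStar t u) : t.norm = u.norm := by
  induction h with
  | refl => rfl
  | tail _ h ih => exact ih.trans (tstep_norm h)

lemma fstar_norm {A B : Fm} (h : FStar A B) : A.norm = B.norm := by
  induction h with
  | refl => rfl
  | tail _ h ih => exact ih.trans (fstep_norm h)

lemma tconf {t u v : Tm} (h1 : TStar t u) (h2 : TStar t v) :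
    ∃ w, TStar u w ∧ TStar v w :=
  ⟨t.norm, (tstar_norm h1) ▸ tm_star_norm u, (tstar_norm h2) ▸ tm_star_norm v⟩

lemma fconf {A B C : Fm} (h1 : FStar A B) (h2 : FStar A C) :
    ∃ D, FStar B D ∧ FStar C D :=
  ⟨A.norm, (fstar_norm h1) ▸ fm_star_norm B, (fstar_norm h2) ▸ fm_star_norm C⟩

/-- The rewrite system WS is locally confluent; its critical pairs, coming from
the overlap of `t[nil] → t` with the homomorphic substitution rules for `s`,
`+` and `×`, are joinable; and, combined with termination, WS is confluent. -/
theorem stmt_17 :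
    -- local confluence on terms
    (∀ t u v : Tm, TStep t u → TStep t v →
      ∃ w, Relation.ReflTransGen TStep u w ∧ Relation.ReflTransGen TStep v w) ∧
    -- local confluence on formulas
    (∀ A B C : Fm, FStep A B → FStep A C →
      ∃ D, Relation.ReflTransGen FStep B D ∧ Relation.ReflTransGen FStep C D) ∧
    -- joinability of the critical pair for s
    (∀ t : Tm, ∃ w, Relation.ReflTransGen TStep (.s t) w ∧
      Relation.ReflTransGen TStep (.s (.sub t .nil)) w) ∧
    -- joinability of the critical pair for +
    (∀ t u : Tm, ∃ w, Relation.ReflTransGen TStep (.plus t u) w ∧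
      Relation.ReflTransGen TStep (.plus (.sub t .nil) (.sub u .nil)) w) ∧
    -- joinability of the critical pair for ×
    (∀ t u : Tm, ∃ w, Relation.ReflTransGen TStep (.times t u) w ∧
      Relation.ReflTransGen TStep (.times (.sub t .nil) (.sub u .nil)) w) ∧
    -- confluence on terms
    (∀ t u v : Tm, Relation.ReflTransGen TStep t u → Relation.ReflTransGen TStep t v →
      ∃ w, Relation.ReflTransGen TStep u w ∧ Relation.ReflTransGen TStep v w) ∧
    -- confluence on formulas
    (∀ A B C : Fm, Relation.ReflTransGen FStep A B → Relation.ReflTransGen FStep A C →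
      ∃ D, Relation.ReflTransGen FStep B D ∧ Relation.ReflTransGen FStep C D) := by
  refine ⟨fun t u v h1 h2 => tconf (.single h1) (.single h2),
    fun A B C h1 h2 => fconf (.single h1) (.single h2),
    fun t => ⟨.s t, .refl, .single (.sC (.subNil t))⟩,
    fun t u => ⟨.plus t u, .refl, .head (.plusL (.subNil t)) (.single (.plusR (.subNil u)))⟩,
    fun t u => ⟨.times t u, .refl, .head (.timesL (.subNil t)) (.single (.timesR (.subNil u)))⟩,
    fun t u v h1 h2 => tconf h1 h2,
    fun A B C h1 h2 => fconf h1 h2⟩
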